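/- Let f : ℝ → ℝ be differentiable, a < b, and suppose f(ξ) ∈ (a, b) for all ξ with lim_{ξ→−∞} f(ξ) = a, lim_{ξ→+∞} f(ξ) = b, and f′(ξ) ≥ c (b − f(ξ))(f(ξ) − a) for some c > 0 and all ξ. Then f is strictly increasing on ℝ. -/
import Mathlib

theorem shock_profile_strictly_monotone
    (a b c : ℝ) (hab : a < b) (hc : 0 < c)
    (f : ℝ → ℝ) (hf : Differentiable ℝ f)
    (hrange : ∀ ξ : ℝ, f ξ ∈ Set.Ioo a b)
    (hlima : Filter.Tendsto f Filter.atBot (nhds a))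
    (hlimb : Filter.Tendsto f Filter.atTop (nhds b))
    (hlb : ∀ ξ : ℝ, c * (b - f ξ) * (f ξ - a) ≤ deriv f ξ) :
    StrictMono f := by
  apply strictMono_of_deriv_pos
  intro x
  have h := hrange x
  have : 0 < c * (b - f x) * (f x - a) := by
    exact mul_pos (mul_pos hc (by linarith [h.2])) (by linarith [h.1])
  linarith [hlb x]
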